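/- arXiv:2008.03253 — 3 statements merged into one kernel-verified Lean document; each statement's English description precedes it below -/
import Mathlib

section
/- Let H be a complex Hilbert space, S ∈ B(H) with σ(S) = {0} and σ_p(S*) = ∅. Let e ∈ ker S be nonzero and f ∈ range(S*). Define the rank-one operator F = e ⊗ f by Fx = ⟨x, e⟩ f. Then σ(S* + αF) = {0} for all α ∈ ℂ. -/
open ContinuousLinearMap

/-- Let `S ∈ B(H)` be quasinilpotent with `σ_p(S*) = ∅`, let `e ∈ ker S` be nonzero,
`f ∈ range S*`, and let `F` be the rank-one operator `F x = ⟨x, e⟩ f`. Then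
`σ(S* + αF) = {0}` for all `α ∈ ℂ`. -/
theorem stmt_10 {H : Type*} [NormedAddCommGroup H] [InnerProductSpace ℂ H]
    [CompleteSpace H] (S : H →L[ℂ] H)
    (hS : spectrum ℂ S = {0})
    (hps : ¬ ∃ (μ : ℂ) (x : H), x ≠ 0 ∧ adjoint S x = μ • x)
    (e f : H) (he : e ∈ LinearMap.ker (S : H →ₗ[ℂ] H)) (he0 : e ≠ 0)
    (hf : f ∈ LinearMap.range ((adjoint S : H →L[ℂ] H) : H →ₗ[ℂ] H))
    (F : H →L[ℂ] H) (hF : ∀ x : H, F x = (inner ℂ e x : ℂ) • f) :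
    ∀ α : ℂ, spectrum ℂ (adjoint S + α • F) = {0} := by
  intro α
  set T : H →L[ℂ] H := adjoint S with hTdef
  have heS : S e = 0 := he
  have heT : ∀ x : H, (inner ℂ e (T x) : ℂ) = 0 := by
    intro x
    rw [hTdef, adjoint_inner_right, heS, inner_zero_left]
  have hef : (inner ℂ e f : ℂ) = 0 := by
    obtain ⟨g, rfl⟩ := hf
    exact heT g
  -- no nonzero eigenvalues of T + α • F
  have noeig : ∀ μ : ℂ, μ ≠ 0 → ∀ x : H, (T + α • F) x = μ • x → x = 0 := by
    intro μ hμ x hx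
    by_contra hx0
    have h1 : (inner ℂ e ((T + α • F) x) : ℂ) = μ * inner ℂ e x := by
      rw [hx, inner_smul_right]
    have h2 : (inner ℂ e ((T + α • F) x) : ℂ) = 0 := by
      simp [add_apply, smul_apply, inner_add_right, inner_smul_right, heT, hF, hef]
    have hex : (inner ℂ e x : ℂ) = 0 := by
      have := h1.symm.trans h2
      exact (mul_eq_zero.mp this).resolve_left hμ
    have hFx : F x = 0 := by rw [hF, hex, zero_smul]
    have hTx : T x = μ • x := by
      have := hx
      rw [add_apply, smul_apply, hFx, smul_zero, add_zero] at this
      exact this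
    exact hps ⟨μ, x, hx0, hTx⟩
  -- main: every nonzero μ is not in the spectrum
  have hmain : ∀ μ : ℂ, μ ≠ 0 → IsUnit (algebraMap ℂ (H →L[ℂ] H) μ - (T + α • F)) := by
    intro μ hμ
    -- invertibility of μ - T from quasinilpotency of S
    have hu : IsUnit (algebraMap ℂ (H →L[ℂ] H) μ - T) := by
      have h1 : (starRingEnd ℂ μ) ∉ spectrum ℂ S := by
        rw [hS]
        simpa using fun h => hμ (by simpa using congrArg (starRingEnd ℂ) h)
      have h2 : IsUnit (algebraMap ℂ (H →L[ℂ] H) (starRingEnd ℂ μ) - S) := by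
        rw [spectrum.mem_iff, not_not] at h1
        exact h1
      have h3 := h2.star
      rwa [star_sub, ← algebraMap_star_comm, star_eq_adjoint, ← hTdef,
        RCLike.star_def, starRingEnd_self_apply] at h3
    obtain ⟨U, hU⟩ := hu
    set u : H →L[ℂ] H := algebraMap ℂ (H →L[ℂ] H) μ - T with hudef
    set B : H →L[ℂ] H := ↑U⁻¹ with hBdef
    have hBu : B * u = 1 := by rw [hBdef, ← hU]; exact U.inv_mul
    have huB : u * B = 1 := by rw [hBdef, ← hU]; exact U.mul_inv
    set w : H := α • B f with hwdef
    set c : ℂ := inner ℂ e w with hcdef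
    have huw : u w = α • f := by
      have h4 : u (B f) = f := by
        have := congrArg (fun (φ : H →L[ℂ] H) => φ f) huB
        simpa [mul_apply] using this
      rw [hwdef, map_smul, h4]
    by_cases hc : c = 1
    · exfalso
      have hw0 : w ≠ 0 := by
        intro h
        rw [hcdef, h, inner_zero_right] at hc
        exact one_ne_zero hc.symm
      have heig : (T + α • F) w = μ • w := by
        have hTw : T w = μ • w - α • f := by
          have : μ • w - T w = α • f := by
            have := huw
            rwa [hudef, sub_apply, Algebra.algebraMap_eq_smul_one, smul_apply,
              one_apply_eq_self] at this
          rw [sub_eq_iff_eq_add] at this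
          rw [this]
          abel
        have hFw : F w = f := by rw [hF, ← hcdef, hc, one_smul]
        rw [add_apply, smul_apply, hTw, hFw]
        abel
      exact hw0 (noeig μ hμ w heig)
    · -- construct explicit inverse
      set G : H →L[ℂ] H := (innerSL ℂ e).smulRight w with hGdef
      have hGapp : ∀ x : H, G x = (inner ℂ e x : ℂ) • w := fun x => rfl
      set M : H →L[ℂ] H := 1 + (1 - c)⁻¹ • G with hMdef
      have hc1 : (1 : ℂ) - c ≠ 0 := sub_ne_zero.mpr (Ne.symm hc)
      have hfact : algebraMap ℂ (H →L[ℂ] H) μ - (T + α • F) = u * (1 - G) := by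
        ext x
        have h5 : (1 - G) x = x - (inner ℂ e x : ℂ) • w := by
          rw [sub_apply, one_apply_eq_self, hGapp]
        have h6 : (u * (1 - G)) x = u x - (inner ℂ e x : ℂ) • (α • f) := by
          rw [mul_apply_eq_comp, h5, map_sub, map_smul, huw]
        rw [h6, hudef]
        simp only [sub_apply, add_apply, smul_apply, Algebra.algebraMap_eq_smul_one,
          one_apply_eq_self, hF]
        match_scalars <;> ring
      have hMG : M * (1 - G) = 1 := by
        ext x
        simp only [mul_apply_eq_comp, one_apply_eq_self]
        have h1 : (1 - G) x = x - (inner ℂ e x : ℂ) • w := by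
          rw [sub_apply, one_apply_eq_self, hGapp]
        rw [h1, hMdef]
        simp only [add_apply, one_apply_eq_self, smul_apply, hGapp]
        rw [inner_sub_right, inner_smul_right, ← hcdef]
        have key : ((1 : ℂ) - c)⁻¹ * (1 - c) = 1 := inv_mul_cancel₀ hc1
        match_scalars
        · ring
        · linear_combination ((inner ℂ e x : ℂ) * α) * key
      have hGM : (1 - G) * M = 1 := by
        ext x
        simp only [mul_apply_eq_comp, one_apply_eq_self]
        have h1 : M x = x + (1 - c)⁻¹ • ((inner ℂ e x : ℂ) • w) := by
          rw [hMdef]; simp only [add_apply, one_apply_eq_self, smul_apply, hGapp]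
        rw [h1, sub_apply, one_apply_eq_self, hGapp, inner_add_right, inner_smul_right,
          inner_smul_right, ← hcdef]
        have key : ((1 : ℂ) - c)⁻¹ * (1 - c) = 1 := inv_mul_cancel₀ hc1
        match_scalars
        · ring
        · linear_combination ((inner ℂ e x : ℂ) * α) * key
      rw [hfact]
      refine ⟨⟨u * (1 - G), M * B, ?_, ?_⟩, rfl⟩
      · calc u * (1 - G) * (M * B) = u * ((1 - G) * M) * B := by noncomm_ring
          _ = 1 := by rw [hGM, mul_one, huB]
      · calc M * B * (u * (1 - G)) = M * (B * u) * (1 - G) := by noncomm_ring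
          _ = 1 := by rw [hBu, mul_one, hMG]
  -- assemble
  have hsub : spectrum ℂ (T + α • F) ⊆ {0} := by
    intro μ hμ
    by_contra h0
    exact (spectrum.mem_iff.mp hμ) (hmain μ h0)
  have hnt : Nontrivial H := ⟨e, 0, he0⟩
  have hne : (spectrum ℂ (T + α • F)).Nonempty := spectrum.nonempty _
  obtain ⟨z, hz⟩ := hne
  have hz0 : z = 0 := hsub hz
  apply Set.Subset.antisymm hsub
  intro y hy
  rw [Set.mem_singleton_iff.mp hy, ← hz0]
  exact hz
end

section
/- Let ρ, φ > 0 with 0 < 4φ < ρ/3, let a ∈ ℂ with 2φ < |a| < 3φ, and let f be analytic on the closed ball of radius ρ centered at 0, with |f(z)| ≤ M on this ball and f(a) ≠ 0. Let N be the number of zeros of f (counted without multiplicity) in the closed ball of radius ρ/3 minus the closed ball of radius 4φ. Then N ≤ ln(M/|f(a)|) / ln(2/(1 + |a|/(4φ))). -/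
open Metric

private lemma key_lemma (ρ φ : ℝ) (a : ℂ) (R : ℝ)
    (hφ : 0 < φ) (hρ : 4 * φ < ρ / 3)
    (ha : ‖a‖ < 3 * φ) (hR : ρ < R) :
    ∀ (n : ℕ) (f : ℂ → ℂ) (M : ℝ) (S : Finset ℂ), S.card = n →
      DifferentiableOn ℂ f (ball (0:ℂ) R) →
      (∀ z ∈ sphere (0:ℂ) ρ, ‖f z‖ ≤ M) →
      (∀ z ∈ S, z ∈ closedBall (0:ℂ) (ρ/3) \ closedBall (0:ℂ) (4*φ) ∧ f z = 0) →
      ‖f a‖ ≤ M * ((1 + ‖a‖ / (4 * φ)) / 2) ^ n := by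
  have hρ0 : 0 < ρ := by linarith
  have haρ : ‖a‖ < ρ := by linarith
  intro n
  induction n with
  | zero =>
    intro f M S hcard hd hM _
    have hdc : DiffContOnCl ℂ f (ball (0:ℂ) ρ) := by
      apply DifferentiableOn.diffContOnCl
      rw [closure_ball (0:ℂ) hρ0.ne']
      exact hd.mono (closedBall_subset_ball hR)
    have := Complex.norm_le_of_forall_mem_frontier_norm_le (isBounded_ball)
      hdc (C := M) ?_ (z := a) ?_
    · simpa using this
    · intro z hz
      rw [frontier_ball (0:ℂ) hρ0.ne'] at hz
      simpa using hM z hz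
    · rw [closure_ball (0:ℂ) hρ0.ne']
      simpa [Complex.dist_eq] using haρ.le
  | succ n ih =>
    intro f M S hcard hd hM hS
    have hSne : S.Nonempty := Finset.card_pos.mp (by omega)
    obtain ⟨z₀, hz₀⟩ := hSne
    obtain ⟨hz₀mem, hz₀zero⟩ := hS z₀ hz₀
    have hz₀le : ‖z₀‖ ≤ ρ / 3 := by
      simpa [Complex.dist_eq] using hz₀mem.1
    set g : ℂ → ℂ := dslope f z₀ with hg
    have hz₀R : ball (0:ℂ) R ∈ nhds z₀ := by
      apply isOpen_ball.mem_nhds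
      simp only [mem_ball, Complex.dist_eq, sub_zero]
      linarith
    have hgd : DifferentiableOn ℂ g (ball (0:ℂ) R) :=
      (Complex.differentiableOn_dslope hz₀R).mpr hd
    have hfg : ∀ z, f z = (z - z₀) * g z := by
      intro z
      have := sub_smul_dslope f z₀ z
      rw [hz₀zero, sub_zero] at this
      simpa [smul_eq_mul] using this.symm
    -- M ≥ 0
    have hMnn : 0 ≤ M := by
      obtain ⟨z, hz⟩ := (NormedSpace.sphere_nonempty (x := (0:ℂ)) (r := ρ)).mpr hρ0.le
      exact le_trans (norm_nonneg _) (hM z hz)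
    -- bound for g on the sphere
    have hgM : ∀ z ∈ sphere (0:ℂ) ρ, ‖g z‖ ≤ 3 * M / (2 * ρ) := by
      intro z hz
      have hzρ : ‖z‖ = ρ := by simpa [Complex.dist_eq] using hz
      have h2 : ‖z‖ - ‖z₀‖ ≤ ‖z - z₀‖ := by
        simpa using norm_sub_norm_le z z₀
      have h1 : 2 * ρ / 3 ≤ ‖z - z₀‖ := by linarith
      have hfz := hM z hz
      rw [hfg z, norm_mul] at hfz
      have hgnn : 0 ≤ ‖g z‖ := norm_nonneg _
      rw [le_div_iff₀ (by positivity : (0:ℝ) < 2 * ρ)]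
      nlinarith [mul_le_mul_of_nonneg_right h1 hgnn]
    have hgS : ∀ z ∈ S.erase z₀, z ∈ closedBall (0:ℂ) (ρ/3) \ closedBall (0:ℂ) (4*φ) ∧ g z = 0 := by
      intro z hz
      obtain ⟨hzne, hzS⟩ := Finset.mem_erase.mp hz
      obtain ⟨hmem, hzero⟩ := hS z hzS
      refine ⟨hmem, ?_⟩
      have := hfg z
      rw [hzero] at this
      have hne : z - z₀ ≠ 0 := sub_ne_zero.mpr hzne
      field_simp at this
      exact (mul_eq_zero.mp this.symm).resolve_left hne
    have hcard' : (S.erase z₀).card = n := by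
      rw [Finset.card_erase_of_mem hz₀]; omega
    have hga := ih g (3 * M / (2 * ρ)) (S.erase z₀) hcard' hgd hgM hgS
    -- combine
    set c : ℝ := (1 + ‖a‖ / (4 * φ)) / 2 with hc
    have hcpos : 0 < c := by
      have : 0 ≤ ‖a‖ / (4 * φ) := by positivity
      rw [hc]; linarith
    have hcn : (0:ℝ) ≤ c ^ n := by positivity
    have hfa : ‖f a‖ = ‖a - z₀‖ * ‖g a‖ := by
      rw [hfg a, norm_mul]
    have haz₀ : ‖a - z₀‖ ≤ ‖a‖ + ρ / 3 := by
      calc ‖a - z₀‖ ≤ ‖a‖ + ‖z₀‖ := by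
            simpa [sub_eq_add_neg] using norm_add_le a (-z₀)
        _ ≤ ‖a‖ + ρ / 3 := by linarith
    have hganonneg : 0 ≤ ‖g a‖ := norm_nonneg _
    have habs : 0 ≤ ‖a‖ := norm_nonneg _
    rw [hfa, pow_succ]
    -- key numeric inequality: (|a| + ρ/3) * (3M/(2ρ)) ≤ M * c
    have hkey : (‖a‖ + ρ / 3) * (3 * M / (2 * ρ)) ≤ M * c := by
      set q : ℝ := ‖a‖ / (4 * φ) with hqdef
      have hq : q * (4 * φ) = ‖a‖ := div_mul_cancel₀ _ (by positivity)
      have hqnn : (0:ℝ) ≤ q := by rw [hqdef]; positivity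
      have hρ12 : 12 * φ ≤ ρ := by linarith
      rw [hc, ← mul_div_assoc, div_le_iff₀ (by positivity : (0:ℝ) < 2 * ρ)]
      rw [← hq]
      nlinarith [mul_nonneg (mul_nonneg hMnn hqnn) (by linarith : (0:ℝ) ≤ ρ - 12 * φ)]
    calc ‖a - z₀‖ * ‖g a‖
        ≤ (‖a‖ + ρ / 3) * (3 * M / (2 * ρ) * c ^ n) := by
          apply mul_le_mul haz₀ hga hganonneg (by linarith)
      _ = ((‖a‖ + ρ / 3) * (3 * M / (2 * ρ))) * c ^ n := by ring
      _ ≤ (M * c) * c ^ n := by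
          apply mul_le_mul_of_nonneg_right hkey hcn
      _ = M * (c ^ n * c) := by ring

/-- Zero-counting bound: if `0 < 4φ < ρ/3`, `2φ < |a| < 3φ`, `f` is analytic on the
closed ball of radius `ρ` with `|f| ≤ M` there and `f(a) ≠ 0`, then the number `N` of
zeros of `f` in `closedBall 0 (ρ/3) \ closedBall 0 (4φ)` satisfies
`N ≤ ln(M/|f(a)|) / ln(2/(1 + |a|/(4φ)))`. -/
theorem stmt_14 (ρ φ M : ℝ) (a : ℂ) (f : ℂ → ℂ)
    (hφ : 0 < φ) (hρ : 4 * φ < ρ / 3)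
    (ha₁ : 2 * φ < ‖a‖) (ha₂ : ‖a‖ < 3 * φ)
    (hf : AnalyticOnNhd ℂ f (closedBall 0 ρ))
    (hM : ∀ z ∈ closedBall (0 : ℂ) ρ, ‖f z‖ ≤ M)
    (hfa : f a ≠ 0) :
    ({z : ℂ | z ∈ closedBall (0 : ℂ) (ρ / 3) \ closedBall (0 : ℂ) (4 * φ) ∧
        f z = 0}).Finite ∧
    (({z : ℂ | z ∈ closedBall (0 : ℂ) (ρ / 3) \ closedBall (0 : ℂ) (4 * φ) ∧
        f z = 0}).ncard : ℝ) ≤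
      Real.log (M / ‖f a‖) /
        Real.log (2 / (1 + ‖a‖ / (4 * φ))) := by
  have hρ0 : 0 < ρ := by linarith
  set Z : Set ℂ := {z : ℂ | z ∈ closedBall (0 : ℂ) (ρ / 3) \ closedBall (0 : ℂ) (4 * φ) ∧
      f z = 0} with hZ
  have hsub : Z ⊆ closedBall (0:ℂ) (ρ/3) := fun z hz => hz.1.1
  have hsub' : closedBall (0:ℂ) (ρ/3) ⊆ closedBall (0:ℂ) ρ :=
    closedBall_subset_closedBall (by linarith)
  have hamem : a ∈ closedBall (0:ℂ) ρ := by
    simp only [mem_closedBall, Complex.dist_eq, sub_zero]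
    linarith
  -- finiteness
  have hfin : Z.Finite := by
    by_contra hinf
    have hinf' : Z.Infinite := hinf
    obtain ⟨z, hzK, hacc⟩ :=
      hinf'.exists_accPt_of_subset_isCompact (isCompact_closedBall (0:ℂ) (ρ/3)) hsub
    have hfreq : ∃ᶠ y in nhdsWithin z {z}ᶜ, f y = 0 := by
      have := accPt_iff_frequently.mp hacc
      rw [frequently_nhdsWithin_iff]
      apply this.mono
      rintro y ⟨hy1, hy2⟩
      exact ⟨hy2.2, hy1⟩
    have := hf.eqOn_zero_of_preconnected_of_frequently_eq_zero
      (convex_closedBall (0:ℂ) ρ).isPreconnected (hsub' hzK) hfreq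
    exact hfa (this hamem)
  refine ⟨hfin, ?_⟩
  -- get a slightly larger radius of differentiability
  obtain ⟨δ, hδ0, hδ⟩ := (isCompact_closedBall (0:ℂ) ρ).exists_thickening_subset_open
    (isOpen_analyticAt ℂ f) hf
  have hdR : DifferentiableOn ℂ f (ball (0:ℂ) (ρ + δ)) := by
    intro x hx
    have : x ∈ Metric.thickening δ (closedBall (0:ℂ) ρ) := by
      rw [Metric.mem_thickening_iff]
      have hx' : ‖x‖ < ρ + δ := by
        simpa [Complex.dist_eq] using hx
      rcases le_or_gt (‖x‖) ρ with h | h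
      · exact ⟨x, by simpa [Complex.dist_eq] using h, by simpa using hδ0⟩
      · have hxpos : 0 < ‖x‖ := lt_trans hρ0 h
        refine ⟨(ρ / ‖x‖ : ℝ) • x, ?_, ?_⟩
        · simp only [mem_closedBall, dist_zero_right, norm_smul, Real.norm_eq_abs]
          rw [abs_of_nonneg (by positivity), div_mul_cancel₀ _ hxpos.ne']
        · have hrw : x - (ρ / ‖x‖ : ℝ) • x = ((1 - ρ / ‖x‖ : ℝ)) • x := by
            rw [sub_smul, one_smul]
          rw [dist_eq_norm, hrw, norm_smul, Real.norm_eq_abs]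
          have h1 : (0:ℝ) ≤ 1 - ρ / ‖x‖ := by
            rw [sub_nonneg, div_le_one hxpos]
            exact h.le
          rw [abs_of_nonneg h1]
          have h2 : (1 - ρ / ‖x‖) * ‖x‖ = ‖x‖ - ρ := by
            field_simp
          rw [h2]
          linarith
    exact ((hδ this).differentiableAt).differentiableWithinAt
  -- apply the key counting lemma
  have hMs : ∀ z ∈ sphere (0:ℂ) ρ, ‖f z‖ ≤ M := fun z hz =>
    hM z (sphere_subset_closedBall hz)
  have hSmem : ∀ z ∈ hfin.toFinset,
      z ∈ closedBall (0:ℂ) (ρ/3) \ closedBall (0:ℂ) (4*φ) ∧ f z = 0 := by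
    intro z hz
    rw [Set.Finite.mem_toFinset] at hz
    exact hz
  have hcardeq : hfin.toFinset.card = Z.ncard :=
    (Set.ncard_eq_toFinset_card Z hfin).symm
  have habs := key_lemma ρ φ a (ρ + δ) hφ hρ ha₂ (by linarith) Z.ncard f M
    hfin.toFinset hcardeq hdR hMs hSmem
  -- log manipulation
  set q : ℝ := ‖a‖ / (4 * φ) with hqdef
  set c : ℝ := (1 + q) / 2 with hcdef
  have hfapos : 0 < ‖f a‖ := norm_pos_iff.mpr hfa
  have hq0 : 0 ≤ q := by rw [hqdef]; positivity
  have hq1 : q < 1 := by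
    rw [hqdef, div_lt_one (by positivity : (0:ℝ) < 4 * φ)]
    linarith
  have hc0 : 0 < c := by rw [hcdef]; linarith
  have hcN : 0 < c ^ Z.ncard := by positivity
  have h1 : 2 / (1 + q) = 1 / c := by rw [hcdef, one_div_div]
  have hL : 0 < Real.log (2 / (1 + q)) := by
    apply Real.log_pos
    rw [lt_div_iff₀ (by linarith : (0:ℝ) < 1 + q)]
    linarith
  have hMpos : 0 < M := lt_of_lt_of_le hfapos (hM a hamem)
  rw [le_div_iff₀ hL, ← Real.log_pow]
  rw [Real.log_le_log_iff (pow_pos (div_pos two_pos (by linarith)) _)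
    (div_pos hMpos hfapos)]
  rw [h1, div_pow, one_pow, div_le_div_iff₀ hcN hfapos]
  calc (1:ℝ) * ‖f a‖ = ‖f a‖ := one_mul _
    _ ≤ M * c ^ Z.ncard := habs
end

section
/- Let T ∈ B(H) be quasinilpotent, F = e ⊗ f rank one, and suppose T + α₀F is not quasinilpotent for some α₀ ≠ 0. Then for every R > 0 there exist α ∈ ℂ and λ ∈ ℂ with |λ| > R such that λ is an eigenvalue of T + αF. -/
/-- If `T` is quasinilpotent, `F = e ⊗ f` is rank one, and `T + α₀F` is not
quasinilpotent for some `α₀ ≠ 0`, then for every `R > 0` there exist `α ∈ ℂ` and an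
eigenvalue `λ` of `T + αF` with `|λ| > R`. -/
theorem stmt_18 {H : Type*} [NormedAddCommGroup H] [InnerProductSpace ℂ H]
    [CompleteSpace H] (T : H →L[ℂ] H)
    (hT : spectrum ℂ T = {0})
    (e f : H) (F : H →L[ℂ] H) (hF : ∀ x : H, F x = (inner ℂ e x : ℂ) • f)
    (hnotq : ∃ α₀ : ℂ, α₀ ≠ 0 ∧ spectrum ℂ (T + α₀ • F) ≠ {0}) :
    ∀ R : ℝ, 0 < R → ∃ (α l : ℂ), R < ‖l‖ ∧
      ∃ x : H, x ≠ 0 ∧ (T + α • F) x = l • x := by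
  intro R hR
  -- every nonzero z is in the resolvent set of T
  have hres : ∀ z : ℂ, z ≠ 0 → z ∈ resolventSet ℂ T := by
    intro z hz
    have : z ∉ spectrum ℂ T := by rw [hT]; simpa using hz
    simpa [spectrum, Set.mem_compl_iff] using this
  set g : ℂ → ℂ := fun z => (inner ℂ e (resolvent T z f) : ℂ) with hg
  -- the function g is analytic off 0
  have hganal : AnalyticOnNhd ℂ g ({0}ᶜ : Set ℂ) := by
    apply DifferentiableOn.analyticOnNhd _ isOpen_compl_singleton
    intro z hz
    have hz0 : z ≠ 0 := by simpa using hz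
    have h1 : HasDerivAt (resolvent T) (-resolvent T z ^ 2) z :=
      spectrum.hasDerivAt_resolvent (hres z hz0)
    have h2 : HasDerivAt (fun w => resolvent T w f)
        ((ContinuousLinearMap.apply ℂ H f) (-resolvent T z ^ 2)) z :=
      (ContinuousLinearMap.apply ℂ H f).hasFDerivAt.comp_hasDerivAt z h1
    have h3 : HasDerivAt g ((innerSL ℂ e) ((ContinuousLinearMap.apply ℂ H f)
        (-resolvent T z ^ 2))) z :=
      (innerSL ℂ e).hasFDerivAt.comp_hasDerivAt z h2
    exact h3.differentiableAt.differentiableWithinAt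
  by_cases hex : ∃ l : ℂ, R < ‖l‖ ∧ g l ≠ 0
  · -- direct construction of the eigenvalue
    obtain ⟨l, hl, hgl⟩ := hex
    have hl0 : l ≠ 0 := by
      intro h; rw [h] at hl; simp at hl; linarith
    have hU : IsUnit (algebraMap ℂ (H →L[ℂ] H) l - T) := hres l hl0
    set x : H := resolvent T l f with hx
    have hTx : (algebraMap ℂ (H →L[ℂ] H) l - T) x = f := by
      have := Ring.mul_inverse_cancel _ hU
      have : ((algebraMap ℂ (H →L[ℂ] H) l - T) * resolvent T l) f = (1 : H →L[ℂ] H) f := by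
        rw [resolvent] at *
        rw [this]
      simpa [ContinuousLinearMap.mul_apply] using this
    have hTx' : T x = l • x - f := by
      have : l • x - T x = f := by
        simpa [ContinuousLinearMap.sub_apply, Algebra.algebraMap_eq_smul_one] using hTx
      rw [← this]; abel
    refine ⟨(g l)⁻¹, l, hl, x, ?_, ?_⟩
    · intro h
      apply hgl
      rw [hg]
      simp only [← hx, h, inner_zero_right]
    · rw [ContinuousLinearMap.add_apply, ContinuousLinearMap.smul_apply, hF, hTx']
      have : (inner ℂ e x : ℂ) = g l := rfl
      rw [this, smul_smul, inv_mul_cancel₀ hgl, one_smul]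
      abel
  · -- g vanishes on |z| > R, hence everywhere off 0, contradiction with hnotq
    exfalso
    push_neg at hex
    -- g vanishes near z₀ = 2R
    have hz₀ : ((2 * R : ℝ) : ℂ) ∈ ({0}ᶜ : Set ℂ) := by
      simp only [Set.mem_compl_iff, Set.mem_singleton_iff]
      exact_mod_cast by positivity
    have hopen : IsOpen {z : ℂ | R < ‖z‖} := isOpen_lt continuous_const continuous_norm
    have hmem : ((2 * R : ℝ) : ℂ) ∈ {z : ℂ | R < ‖z‖} := by
      simp only [Set.mem_setOf_eq, Complex.norm_real, Real.norm_eq_abs]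
      rw [abs_of_pos (by linarith)]
      linarith
    have hev : g =ᶠ[nhds ((2 * R : ℝ) : ℂ)] 0 := by
      filter_upwards [hopen.mem_nhds hmem] with z hz
      exact hex z hz
    have hconn : IsPreconnected ({0}ᶜ : Set ℂ) :=
      (isConnected_compl_singleton_of_one_lt_rank
        (Complex.rank_real_complex ▸ Nat.one_lt_ofNat) 0).isPreconnected
    have hg0 : Set.EqOn g 0 ({0}ᶜ : Set ℂ) :=
      hganal.eqOn_zero_of_preconnected_of_eventuallyEq_zero hconn hz₀ hev
    -- now every T + α F is quasinilpotent
    obtain ⟨α₀, hα₀, hspec⟩ := hnotq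
    apply hspec
    have hnt : Nontrivial (H →L[ℂ] H) := by
      rcases subsingleton_or_nontrivial (H →L[ℂ] H) with h | h
      · exfalso
        have h0 : (0 : ℂ) ∈ spectrum ℂ T := by rw [hT]; simp
        exact spectrum.notMem_iff.mpr (isUnit_of_subsingleton _) h0
      · exact h
    have hsub : spectrum ℂ (T + α₀ • F) ⊆ {0} := by
      intro z hzs
      by_contra hz0
      simp only [Set.mem_singleton_iff] at hz0
      -- build explicit inverse
      have hU : IsUnit (algebraMap ℂ (H →L[ℂ] H) z - T) := hres z hz0
      set A : H →L[ℂ] H := algebraMap ℂ (H →L[ℂ] H) z - T with hA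
      set B : H →L[ℂ] H := resolvent T z with hB
      have hAB : A * B = 1 := Ring.mul_inverse_cancel _ hU
      have hBA : B * A = 1 := Ring.inverse_mul_cancel _ hU
      have hFBF : F * B * F = 0 := by
        ext x
        have hgz : (inner ℂ e (B f) : ℂ) = 0 := hg0 (by simpa using hz0)
        simp [ContinuousLinearMap.mul_apply, hF, inner_smul_right, hgz]
      set C : H →L[ℂ] H := B + α₀ • (B * F * B) with hC
      have h1 : (A - α₀ • F) * C = 1 := by
        have e1 : A * (B * F * B) = F * B := by
          rw [show A * (B * F * B) = (A * B) * (F * B) by noncomm_ring, hAB, one_mul]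
        have e2 : F * (B * F * B) = 0 := by
          rw [show F * (B * F * B) = (F * B * F) * B by noncomm_ring, hFBF, zero_mul]
        have expand : (A - α₀ • F) * C =
            A * B + α₀ • (A * (B * F * B)) - α₀ • (F * B)
              - (α₀ * α₀) • (F * (B * F * B)) := by
          simp only [hC, mul_add, sub_mul, smul_mul_assoc, mul_smul_comm, smul_smul]
          module
        rw [expand, e1, e2, hAB]
        simp
      have h2 : C * (A - α₀ • F) = 1 := by
        have e1 : (B * F * B) * A = B * F := by
          rw [show (B * F * B) * A = (B * F) * (B * A) by noncomm_ring, hBA, mul_one]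
        have e2 : (B * F * B) * F = 0 := by
          rw [show (B * F * B) * F = B * (F * B * F) by noncomm_ring, hFBF, mul_zero]
        have expand : C * (A - α₀ • F) =
            B * A + α₀ • ((B * F * B) * A) - α₀ • (B * F)
              - (α₀ * α₀) • ((B * F * B) * F) := by
          simp only [hC, mul_sub, add_mul, smul_mul_assoc, mul_smul_comm, smul_smul]
          module
        rw [expand, e1, e2, hBA]
        simp
      have hunit : IsUnit (algebraMap ℂ (H →L[ℂ] H) z - (T + α₀ • F)) := by
        have heq : algebraMap ℂ (H →L[ℂ] H) z - (T + α₀ • F) = A - α₀ • F := by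
          rw [hA]; abel
        rw [heq]
        exact ⟨⟨A - α₀ • F, C, h1, h2⟩, rfl⟩
      exact spectrum.notMem_iff.mpr hunit hzs
    have hne : (spectrum ℂ (T + α₀ • F)).Nonempty := spectrum.nonempty _
    rcases Set.subset_singleton_iff_eq.mp hsub with h | h
    · exact absurd h (Set.nonempty_iff_ne_empty.mp hne)
    · exact h
end
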